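/- If φ^{t+1}(n) = φ^t(n) - μ_t φ^t(n+1), ψ^t(n) = φ^{t-1}(n) - μ_t φ^{t-1}(n+1), and P^t φ^{t-1}(n) = ψ^t(n) - μ_t ψ^t(n-1) hold for all n and t, where P^t = (1 - p μ_t)(1 - p^{-1} μ_t), then P^t φ^t(n) = φ^{t+1}(n) - μ_t φ^{t+1}(n-1) for all n and t. -/
import Mathlib


/-- the linear relations imply P^t φ^t(n) = φ^{t+1}(n) - μ_t φ^{t+1}(n-1). -/
theorem stmt_1 (φ ψ : ℤ → ℤ → ℂ) (μ : ℤ → ℂ) (p : ℂ)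
    (hμ : ∀ t, μ t ≠ 0) (hp : p ≠ 0)
    (h1 : ∀ t n, φ (t + 1) n = φ t n - μ t * φ t (n + 1))
    (h2 : ∀ t n, ψ t n = φ (t - 1) n - μ t * φ (t - 1) (n + 1))
    (h3 : ∀ t n, (1 - p * μ t) * (1 - p⁻¹ * μ t) * φ (t - 1) n
          = ψ t n - μ t * ψ t (n - 1)) :
    ∀ t n, (1 - p * μ t) * (1 - p⁻¹ * μ t) * φ t n
      = φ (t + 1) n - μ t * φ (t + 1) (n - 1) := by
  have hpinv : p * p⁻¹ = 1 := mul_inv_cancel₀ hp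
  have key : ∀ t n, (p + p⁻¹) * φ t n = φ t (n + 1) + φ t (n - 1) := by
    intro t n
    have h := h3 (t + 1) n
    rw [h2 (t + 1) n, h2 (t + 1) (n - 1)] at h
    simp only [add_sub_cancel_right, sub_add_cancel] at h
    have h' : μ (t + 1) * ((p + p⁻¹) * φ t n)
        = μ (t + 1) * (φ t (n + 1) + φ t (n - 1)) := by
      linear_combination -h + μ (t + 1) ^ 2 * φ t n * hpinv
    exact mul_left_cancel₀ (hμ (t + 1)) h'
  intro t n
  rw [h1 t n, h1 t (n - 1)]
  simp only [sub_add_cancel]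
  linear_combination -μ t * key t n + μ t ^ 2 * φ t n * hpinv
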